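/- If additionally Reg_⋆(t) ≤ R_⋆(n_⋆(t)) (⋆ is well-specified) and R_i(n_i(t)) ≤ R_⋆(n_⋆(t)) + 1 (balancing), then the conclusion of the previous lemma implies Reg_i(t) ≤ 1 + (1 + n_i(t)/n_⋆(t)) R_⋆(n_⋆(t)) + 2c (1 + √(n_i(t)/n_⋆(t))) √(n_i(t) ℓ), where ℓ = max(ℓ_i, ℓ_⋆). -/

import Mathlib

open Real

/-- If moreover `Reg⋆ ≤ R⋆` (well-specification) and `R_i ≤ R⋆ + 1`
(balancing), then the bound of the previous lemma implies
`Reg_i ≤ 1 + (1 + n_i/n⋆) R⋆ + 2c (1 + √(n_i/n⋆)) √(n_i ℓ)` where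
`ℓ = max(ℓ_i, ℓ⋆)`. -/
theorem regbound_nonelim
    (ni ns Regi Regs Ri Rs c li ls l : ℝ)
    (hni : 0 < ni) (hns : 0 < ns) (hc : 0 < c)
    (hli : 0 < li) (hls : 0 < ls) (hl : l = max li ls)
    (hRegs : 0 ≤ Regs)
    -- conclusion of the previous lemma
    (hprev : Regi ≤ 2 * c * Real.sqrt (li * ni) + Ri + (ni / ns) * Regs
              + 2 * c * Real.sqrt ls * Real.sqrt (ni ^ 2 / ns))
    -- ⋆ is well-specified
    (hwell : Regs ≤ Rs)
    -- balancing
    (hbal : Ri ≤ Rs + 1) :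
    Regi ≤ 1 + (1 + ni / ns) * Rs
            + 2 * c * (1 + Real.sqrt (ni / ns)) * Real.sqrt (ni * l) := by
  have hl1 : li ≤ l := hl ▸ le_max_left _ _
  have hl2 : ls ≤ l := hl ▸ le_max_right _ _
  have h1 : 2 * c * Real.sqrt (li * ni) ≤ 2 * c * Real.sqrt (ni * l) := by
    apply mul_le_mul_of_nonneg_left _ (by positivity)
    apply Real.sqrt_le_sqrt
    rw [mul_comm]
    exact mul_le_mul_of_nonneg_left hl1 hni.le
  have h2 : 2 * c * Real.sqrt ls * Real.sqrt (ni ^ 2 / ns)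
      ≤ 2 * c * Real.sqrt (ni / ns) * Real.sqrt (ni * l) := by
    have : Real.sqrt ls * Real.sqrt (ni ^ 2 / ns)
        = Real.sqrt (ni / ns) * Real.sqrt (ni * ls) := by
      rw [← Real.sqrt_mul hls.le, ← Real.sqrt_mul (by positivity)]
      congr 1; field_simp
    rw [mul_assoc, this, ← mul_assoc]
    apply mul_le_mul_of_nonneg_left _ (by positivity)
    apply Real.sqrt_le_sqrt
    exact mul_le_mul_of_nonneg_left hl2 hni.le
  have h3 : Ri + (ni / ns) * Regs ≤ (Rs + 1) + (ni / ns) * Rs :=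
    add_le_add hbal (mul_le_mul_of_nonneg_left hwell (by positivity))
  nlinarith [hprev]
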